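/- For n a set with |n| > 2, the quotient partial algebra A(n,n) = X(n,n)/∼ has a ≲-complete (∪•, ∅)-representation whose base is the set of all permutations of n: represent [{i} × J] by {σ ∈ Sym(n) : σ(i) ∈ J} and [I × {j}] by {σ ∈ Sym(n) : σ⁻¹(j) ∈ I}. -/
import Mathlib


/-- A subset of `n × n` is axial if it is of the form `{i} × J` or `I × {j}`. -/
def Axial {n : Type} (S : Set (n × n)) : Prop :=
  (∃ (i : n) (J : Set n), S = {i} ×ˢ J) ∨ (∃ (I : Set n) (j : n), S = I ×ˢ {j})

/-- The generating relation for the congruence `∼` on axial sets. -/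
def genRel {n : Type} (S S' : Set (n × n)) : Prop :=
  (∃ (i j : n), S = {i} ×ˢ (Set.univ : Set n) ∧ S' = (Set.univ : Set n) ×ˢ {j}) ∨
  (∃ (i j : n), S = {i} ×ˢ ({j}ᶜ : Set n) ∧ S' = ({i}ᶜ : Set n) ×ˢ {j})

/-- The congruence `∼`. -/
def eqv {n : Type} (S S' : Set (n × n)) : Prop := Relation.EqvGen genRel S S'

/-- `[S] ⊔• [T]` is defined in the quotient `A(n,n)`, expressed via representatives. -/
def qDefined {n : Type} (S T : Set (n × n)) : Prop :=
  ∃ S' T', Axial S' ∧ Axial T' ∧ eqv S S' ∧ eqv T T' ∧ S' ∩ T' = ∅ ∧ Axial (S' ∪ T')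

/-- The order `≲` on the quotient `A(n,n)`, expressed via representatives:
`[S] ≲ [T]` iff `[S] = [T]` or `[S] ⊔• [C] = [T]` for some `C`. -/
def qLesim {n : Type} (S T : Set (n × n)) : Prop :=
  eqv S T ∨ ∃ S' C, Axial S' ∧ Axial C ∧ eqv S S' ∧ S' ∩ C = ∅ ∧
    Axial (S' ∪ C) ∧ eqv (S' ∪ C) T

/-- The representing map: an axial set goes to the set of permutations whose graph
meets it; on `[{i} × J]` this gives `{σ : σ i ∈ J}` and on `[I × {j}]` it gives
`{σ : σ⁻¹ j ∈ I}`. -/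
def theta {n : Type} (S : Set (n × n)) : Set (Equiv.Perm n) :=
  {σ | ∃ p ∈ S, σ p.1 = p.2}

section Basics
variable {n : Type}

lemma theta_row (i : n) (J : Set n) :
    theta ({i} ×ˢ J) = {σ : Equiv.Perm n | σ i ∈ J} := by
  ext σ
  constructor
  · rintro ⟨p, ⟨hp1, hp2⟩, hσ⟩
    simp only [Set.mem_singleton_iff] at hp1
    simp only [Set.mem_setOf_eq]
    rw [hp1] at hσ
    rw [hσ]; exact hp2
  · intro h
    exact ⟨(i, σ i), ⟨rfl, h⟩, rfl⟩

lemma theta_col (I : Set n) (j : n) :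
    theta (I ×ˢ ({j} : Set n)) = {σ : Equiv.Perm n | σ.symm j ∈ I} := by
  ext σ
  constructor
  · rintro ⟨p, ⟨hp1, hp2⟩, hσ⟩
    simp only [Set.mem_singleton_iff] at hp2
    simp only [Set.mem_setOf_eq]
    rw [hp2] at hσ
    rw [← hσ]
    simpa using hp1
  · intro h
    exact ⟨(σ.symm j, j), ⟨h, rfl⟩, σ.apply_symm_apply j⟩

lemma theta_mono {S T : Set (n × n)} (h : S ⊆ T) : theta S ⊆ theta T := by
  rintro σ ⟨p, hp, hσ⟩; exact ⟨p, h hp, hσ⟩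

lemma theta_union (S T : Set (n × n)) : theta (S ∪ T) = theta S ∪ theta T := by
  ext σ
  constructor
  · rintro ⟨p, hp | hp, hσ⟩
    · exact Or.inl ⟨p, hp, hσ⟩
    · exact Or.inr ⟨p, hp, hσ⟩
  · rintro (⟨p, hp, hσ⟩ | ⟨p, hp, hσ⟩)
    · exact ⟨p, Or.inl hp, hσ⟩
    · exact ⟨p, Or.inr hp, hσ⟩

lemma theta_empty : theta (∅ : Set (n × n)) = ∅ := by
  ext σ; simp [theta]

open scoped Classical in
lemma theta_eq_empty_iff (S : Set (n × n)) : theta S = ∅ ↔ S = ∅ := by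
  constructor
  · intro h
    by_contra hS
    obtain ⟨p, hp⟩ := Set.nonempty_iff_ne_empty.2 hS
    have : Equiv.swap p.1 p.2 ∈ theta S := ⟨p, hp, Equiv.swap_apply_left _ _⟩
    rw [h] at this; exact this
  · rintro rfl; exact theta_empty

open scoped Classical in
lemma perm1 (i j : n) : ∃ σ : Equiv.Perm n, σ i = j :=
  ⟨Equiv.swap i j, Equiv.swap_apply_left i j⟩

open scoped Classical in
lemma perm2 {i i' j j' : n} (hi : i ≠ i') (hj : j ≠ j') :
    ∃ σ : Equiv.Perm n, σ i = j ∧ σ i' = j' := by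
  classical
  set τ := Equiv.swap i j with hτ
  refine ⟨τ.trans (Equiv.swap (τ i') j'), ?_, ?_⟩
  · have h1 : τ i = j := Equiv.swap_apply_left i j
    have h2 : τ i' ≠ j := by
      rw [← h1]; exact fun h => hi (τ.injective h).symm
    simp only [Equiv.trans_apply, h1]
    rw [Equiv.swap_apply_of_ne_of_ne (Ne.symm h2) hj]
  · simp only [Equiv.trans_apply]
    exact Equiv.swap_apply_left _ _

end Basics

section Eqv
variable {n : Type}

lemma eqv_of_eq {S T : Set (n × n)} (h : S = T) : eqv S T := h ▸ Relation.EqvGen.refl S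

lemma eqv_rel {S T : Set (n × n)} (h : genRel S T) : eqv S T := Relation.EqvGen.rel _ _ h

lemma eqv_symm {S T : Set (n × n)} (h : eqv S T) : eqv T S := Relation.EqvGen.symm _ _ h

lemma eqv_trans {S T U : Set (n × n)} (h : eqv S T) (h' : eqv T U) : eqv S U :=
  Relation.EqvGen.trans _ _ _ h h'

lemma eqv_row_univ_col (i j : n) :
    eqv ({i} ×ˢ (Set.univ : Set n)) ((Set.univ : Set n) ×ˢ {j}) :=
  eqv_rel (Or.inl ⟨i, j, rfl, rfl⟩)

lemma eqv_row_compl_col (i j : n) :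
    eqv ({i} ×ˢ ({j}ᶜ : Set n)) (({i}ᶜ : Set n) ×ˢ {j}) :=
  eqv_rel (Or.inr ⟨i, j, rfl, rfl⟩)

lemma eqv_theta {S T : Set (n × n)} (h : eqv S T) : theta S = theta T := by
  induction h with
  | rel S T hST =>
    rcases hST with ⟨i, j, rfl, rfl⟩ | ⟨i, j, rfl, rfl⟩
    · rw [theta_row, theta_col]; ext σ; simp
    · rw [theta_row, theta_col]
      ext σ
      simp only [Set.mem_setOf_eq, Set.mem_compl_iff, Set.mem_singleton_iff]
      rw [Equiv.symm_apply_eq]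
      constructor
      · exact fun h1 h2 => h1 h2.symm
      · exact fun h1 h2 => h1 h2.symm
  | refl S => rfl
  | symm S T _ ih => exact ih.symm
  | trans S T U _ _ ih1 ih2 => exact ih1.trans ih2

end Eqv

section Card
variable {n : Type}

lemma nonempty_of_card (hn : 2 < Cardinal.mk n) : Nonempty n := by
  rw [← Cardinal.mk_ne_zero_iff]
  intro h
  rw [h] at hn
  exact absurd hn (by simp)

lemma three_of_card (hn : 2 < Cardinal.mk n) : ∀ x y : n, ∃ z : n, z ≠ x ∧ z ≠ y := by
  intro x y
  by_contra h
  push_neg at h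
  have hsub : (Set.univ : Set n) ⊆ ({x, y} : Set n) := by
    intro z _
    rcases Classical.em (z = x) with hz | hz
    · exact Or.inl hz
    · exact Or.inr (h z hz)
  have h1 : Cardinal.mk n ≤ Cardinal.mk (↥({x, y} : Set n)) := by
    rw [← Cardinal.mk_univ]
    exact Cardinal.mk_le_mk_of_subset hsub
  have h2 : Cardinal.mk (↥({x, y} : Set n)) ≤ 2 := by
    have := Cardinal.mk_insert_le (α := n) (s := {y}) (a := x)
    rw [Cardinal.mk_singleton] at this
    calc Cardinal.mk (↥({x, y} : Set n)) ≤ 1 + 1 := this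
    _ = 2 := by norm_num
  exact absurd (lt_of_lt_of_le hn (h1.trans h2)) (lt_irrefl _)

end Card

section Classify
variable {n : Type}

lemma symm_set_inj {A B : Set (Equiv.Perm n)}
    (h : {σ : Equiv.Perm n | σ.symm ∈ A} = {σ : Equiv.Perm n | σ.symm ∈ B}) : A = B := by
  ext τ
  have := Set.ext_iff.1 h τ.symm
  simpa using this

lemma rowrow_eq_same {i : n} {J J' : Set n}
    (h : {σ : Equiv.Perm n | σ i ∈ J} = {σ : Equiv.Perm n | σ i ∈ J'}) : J = J' := by
  ext j
  obtain ⟨σ, hσ⟩ := perm1 i j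
  have := Set.ext_iff.1 h σ
  simpa [hσ] using this

lemma rowrow_eq (h3 : ∀ x y : n, ∃ z : n, z ≠ x ∧ z ≠ y) {i i' : n} {J J' : Set n}
    (hii' : i ≠ i')
    (h : {σ : Equiv.Perm n | σ i ∈ J} = {σ : Equiv.Perm n | σ i' ∈ J'}) :
    (J = ∅ ∧ J' = ∅) ∨ (J = Set.univ ∧ J' = Set.univ) := by
  have hiff : ∀ σ : Equiv.Perm n, σ i ∈ J ↔ σ i' ∈ J' := fun σ => Set.ext_iff.1 h σ
  by_cases hJ : J = ∅
  · left
    refine ⟨hJ, ?_⟩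
    by_contra hJ'
    obtain ⟨j', hj'⟩ := Set.nonempty_iff_ne_empty.2 hJ'
    obtain ⟨σ, hσ⟩ := perm1 i' j'
    have := (hiff σ).2 (by rw [hσ]; exact hj')
    rw [hJ] at this; exact this
  · right
    obtain ⟨j0, hj0⟩ := Set.nonempty_iff_ne_empty.2 hJ
    obtain ⟨σ1, hσ1⟩ := perm1 i j0
    have hj0' : σ1 i' ∈ J' := (hiff σ1).1 (by rw [hσ1]; exact hj0)
    set j0' := σ1 i' with hj0'def
    have step1 : ∀ y : n, y ≠ j0' → y ∈ J := by
      intro y hy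
      obtain ⟨σ, h1, h2⟩ := perm2 hii' hy
      have := (hiff σ).2 (by rw [h2]; exact hj0')
      rwa [h1] at this
    have step2 : ∀ y : n, y ≠ j0 → y ∈ J' := by
      intro y hy
      obtain ⟨σ, h1, h2⟩ := perm2 hii' (Ne.symm hy)
      have := (hiff σ).1 (by rw [h1]; exact hj0)
      rwa [h2] at this
    obtain ⟨w, hw1, hw2⟩ := h3 j0 j0'
    have hwJ' : w ∈ J' := step2 w hw1
    have hwJ : w ∈ J := step1 w hw2
    have step3 : j0' ∈ J := by
      obtain ⟨σ, h1, h2⟩ := perm2 hii' (Ne.symm hw2)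
      have := (hiff σ).2 (by rw [h2]; exact hwJ')
      rwa [h1] at this
    have step4 : j0 ∈ J' := by
      obtain ⟨σ, h1, h2⟩ := perm2 hii' hw1
      have := (hiff σ).1 (by rw [h1]; exact hwJ)
      rwa [h2] at this
    constructor
    · ext y
      simp only [Set.mem_univ, iff_true]
      rcases Classical.em (y = j0') with rfl | hy
      · exact step3
      · exact step1 y hy
    · ext y
      simp only [Set.mem_univ, iff_true]
      rcases Classical.em (y = j0) with rfl | hy
      · exact step4
      · exact step2 y hy

lemma rowcol_eq (h3 : ∀ x y : n, ∃ z : n, z ≠ x ∧ z ≠ y) {i j : n} {J I : Set n}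
    (h : {σ : Equiv.Perm n | σ i ∈ J} = {σ : Equiv.Perm n | σ.symm j ∈ I}) :
    (J = ∅ ∧ I = ∅) ∨ (J = Set.univ ∧ I = Set.univ) ∨
    (J = {j} ∧ I = {i}) ∨ (J = ({j}ᶜ : Set n) ∧ I = ({i}ᶜ : Set n)) := by
  have hiff : ∀ σ : Equiv.Perm n, σ i ∈ J ↔ σ.symm j ∈ I := fun σ => Set.ext_iff.1 h σ
  have hsymm : ∀ (σ : Equiv.Perm n) (x : n), σ x = j → σ.symm j = x := by
    intro σ x hx; rw [← hx, Equiv.symm_apply_apply]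
  by_cases hJ : J = ∅
  · left
    refine ⟨hJ, ?_⟩
    by_contra hI
    obtain ⟨i1, hi1⟩ := Set.nonempty_iff_ne_empty.2 hI
    obtain ⟨σ, hσ⟩ := perm1 i1 j
    have := (hiff σ).2 (by rw [hsymm σ i1 hσ]; exact hi1)
    rw [hJ] at this; exact this
  by_cases hI : I = ∅
  · exfalso
    obtain ⟨j0, hj0⟩ := Set.nonempty_iff_ne_empty.2 hJ
    obtain ⟨σ, hσ⟩ := perm1 i j0
    have := (hiff σ).1 (by rw [hσ]; exact hj0)
    rw [hI] at this; exact this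
  obtain ⟨j0, hj0⟩ := Set.nonempty_iff_ne_empty.2 hJ
  obtain ⟨i0, hi0⟩ := Set.nonempty_iff_ne_empty.2 hI
  have key : i ∈ I ↔ j ∈ J := by
    obtain ⟨σ, hσ⟩ := perm1 i j
    constructor
    · intro hi; have := (hiff σ).2 (by rw [hsymm σ i hσ]; exact hi); rwa [hσ] at this
    · intro hj; have := (hiff σ).1 (by rw [hσ]; exact hj)
      rwa [hsymm σ i hσ] at this
  by_cases hJ1 : ∃ j1 ∈ J, j1 ≠ j
  · obtain ⟨j1, hj1J, hj1⟩ := hJ1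
    have stepA : ∀ i1 : n, i1 ≠ i → i1 ∈ I := by
      intro i1 hi1
      obtain ⟨σ, h1, h2⟩ := perm2 (Ne.symm hi1) hj1
      have := (hiff σ).1 (by rw [h1]; exact hj1J)
      rwa [hsymm σ i1 h2] at this
    obtain ⟨z, hz, _⟩ := h3 i i
    have hzI : z ∈ I := stepA z hz
    have stepB : ∀ j2 : n, j2 ≠ j → j2 ∈ J := by
      intro j2 hj2
      obtain ⟨σ, h1, h2⟩ := perm2 (Ne.symm hz) hj2
      have := (hiff σ).2 (by rw [hsymm σ z h2]; exact hzI)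
      rwa [h1] at this
    by_cases hjJ : j ∈ J
    · right; left
      constructor
      · ext y; simp only [Set.mem_univ, iff_true]
        rcases Classical.em (y = j) with rfl | hy
        · exact hjJ
        · exact stepB y hy
      · ext y; simp only [Set.mem_univ, iff_true]
        rcases Classical.em (y = i) with rfl | hy
        · exact key.2 hjJ
        · exact stepA y hy
    · right; right; right
      constructor
      · ext y; simp only [Set.mem_compl_iff, Set.mem_singleton_iff]
        constructor
        · intro hy hyj; exact hjJ (hyj ▸ hy)
        · exact stepB y
      · ext y; simp only [Set.mem_compl_iff, Set.mem_singleton_iff]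
        constructor
        · intro hy hyi
          exact (fun hiI => hjJ (key.1 hiI)) (hyi ▸ hy)
        · exact stepA y
  · push_neg at hJ1
    have hJeq : J = {j} := by
      ext y
      simp only [Set.mem_singleton_iff]
      constructor
      · exact fun hy => hJ1 y hy
      · rintro rfl
        have := hJ1 j0 hj0
        rwa [← this]
    have hiI : i ∈ I := by
      obtain ⟨σ, hσ⟩ := perm1 i j
      have := (hiff σ).1 (by rw [hσ, hJeq]; rfl)
      rwa [hsymm σ i hσ] at this
    right; right; left
    refine ⟨hJeq, ?_⟩
    ext i1
    simp only [Set.mem_singleton_iff]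
    constructor
    · intro hi1
      by_contra hne
      obtain ⟨σ, hσ⟩ := perm1 i1 j
      have := (hiff σ).2 (by rw [hsymm σ i1 hσ]; exact hi1)
      rw [hJeq] at this
      have hij : σ i = j := this
      exact hne (σ.injective (hσ.trans hij.symm))
    · rintro rfl; exact hiI

lemma colcol_eq_same {j : n} {I I' : Set n}
    (h : {σ : Equiv.Perm n | σ.symm j ∈ I} = {σ : Equiv.Perm n | σ.symm j ∈ I'}) : I = I' := by
  have h' : {σ : Equiv.Perm n | σ j ∈ I} = {σ : Equiv.Perm n | σ j ∈ I'} := symm_set_inj h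
  exact rowrow_eq_same h'

lemma colcol_eq (h3 : ∀ x y : n, ∃ z : n, z ≠ x ∧ z ≠ y) {j j' : n} {I I' : Set n}
    (hjj' : j ≠ j')
    (h : {σ : Equiv.Perm n | σ.symm j ∈ I} = {σ : Equiv.Perm n | σ.symm j' ∈ I'}) :
    (I = ∅ ∧ I' = ∅) ∨ (I = Set.univ ∧ I' = Set.univ) := by
  have h' : {σ : Equiv.Perm n | σ j ∈ I} = {σ : Equiv.Perm n | σ j' ∈ I'} := symm_set_inj h
  exact rowrow_eq h3 hjj' h'

end Classify

section Disj
variable {n : Type}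

lemma axial_empty (x : n) : Axial (∅ : Set (n × n)) :=
  Or.inl ⟨x, ∅, (Set.prod_empty).symm⟩

lemma row_decomp {S : Set (n × n)} {i : n} {J : Set n} (h : S ⊆ {i} ×ˢ J) :
    S = {i} ×ˢ {j | (i, j) ∈ S} := by
  ext ⟨x, y⟩
  constructor
  · intro hxy
    have h1 := h hxy
    have hx : x = i := h1.1
    subst hx
    exact ⟨rfl, hxy⟩
  · rintro ⟨hx, hy⟩
    have hx' : x = i := hx
    subst hx'
    exact hy

lemma col_decomp {S : Set (n × n)} {I : Set n} {j : n} (h : S ⊆ I ×ˢ {j}) :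
    S = {i | (i, j) ∈ S} ×ˢ {j} := by
  ext ⟨x, y⟩
  constructor
  · intro hxy
    have h1 := h hxy
    have hy : y = j := h1.2
    subst hy
    exact ⟨hxy, rfl⟩
  · rintro ⟨hx, hy⟩
    have hy' : y = j := hy
    subst hy'
    exact hx

lemma disj_of_union_axial {S T : Set (n × n)} (hd : S ∩ T = ∅) (hax : Axial (S ∪ T)) :
    theta S ∩ theta T = ∅ := by
  rw [Set.eq_empty_iff_forall_notMem]
  rintro σ ⟨h1, h2⟩
  rcases hax with ⟨i, J, hJ⟩ | ⟨I, j, hI⟩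
  · have hS : S = {i} ×ˢ {j | (i, j) ∈ S} := row_decomp (hJ ▸ Set.subset_union_left)
    have hT : T = {i} ×ˢ {j | (i, j) ∈ T} := row_decomp (hJ ▸ Set.subset_union_right)
    rw [hS, theta_row] at h1
    rw [hT, theta_row] at h2
    have : (i, σ i) ∈ S ∩ T := ⟨h1, h2⟩
    rw [hd] at this; exact this
  · have hS : S = {i | (i, j) ∈ S} ×ˢ {j} := col_decomp (hI ▸ Set.subset_union_left)
    have hT : T = {i | (i, j) ∈ T} ×ˢ {j} := col_decomp (hI ▸ Set.subset_union_right)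
    rw [hS, theta_col] at h1
    rw [hT, theta_col] at h2
    have : (σ.symm j, j) ∈ S ∩ T := ⟨h1, h2⟩
    rw [hd] at this; exact this

lemma symm_set_disj {A B : Set (Equiv.Perm n)}
    (h : {σ : Equiv.Perm n | σ.symm ∈ A} ∩ {σ : Equiv.Perm n | σ.symm ∈ B} = ∅) :
    A ∩ B = ∅ := by
  rw [Set.eq_empty_iff_forall_notMem]
  rintro τ ⟨hA, hB⟩
  have : τ.symm ∈ ({σ : Equiv.Perm n | σ.symm ∈ A} ∩ {σ : Equiv.Perm n | σ.symm ∈ B}) := by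
    constructor <;> simp only [Set.mem_setOf_eq, Equiv.symm_symm] <;> assumption
  rw [h] at this; exact this

lemma rowrow_disj_same {i : n} {J J' : Set n}
    (h : {σ : Equiv.Perm n | σ i ∈ J} ∩ {σ : Equiv.Perm n | σ i ∈ J'} = ∅) : J ∩ J' = ∅ := by
  rw [Set.eq_empty_iff_forall_notMem]
  rintro j ⟨hj, hj'⟩
  obtain ⟨σ, hσ⟩ := perm1 i j
  have : σ ∈ ({σ : Equiv.Perm n | σ i ∈ J} ∩ {σ : Equiv.Perm n | σ i ∈ J'}) :=
    ⟨by rw [Set.mem_setOf_eq, hσ]; exact hj, by rw [Set.mem_setOf_eq, hσ]; exact hj'⟩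
  rw [h] at this; exact this

open scoped Classical in
lemma rowrow_disj {i i' : n} {J J' : Set n} (hii' : i ≠ i')
    (h : {σ : Equiv.Perm n | σ i ∈ J} ∩ {σ : Equiv.Perm n | σ i' ∈ J'} = ∅) :
    J = ∅ ∨ J' = ∅ ∨ ∃ j0, J = {j0} ∧ J' = {j0} := by
  have key : ∀ j ∈ J, ∀ j' ∈ J', j = j' := by
    intro j hj j' hj'
    by_contra hne
    obtain ⟨σ, h1, h2⟩ := perm2 hii' hne
    have : σ ∈ ({σ : Equiv.Perm n | σ i ∈ J} ∩ {σ : Equiv.Perm n | σ i' ∈ J'}) :=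
      ⟨by rw [Set.mem_setOf_eq, h1]; exact hj, by rw [Set.mem_setOf_eq, h2]; exact hj'⟩
    rw [h] at this; exact this
  by_cases hJ : J = ∅
  · exact Or.inl hJ
  by_cases hJ' : J' = ∅
  · exact Or.inr (Or.inl hJ')
  obtain ⟨j0, hj0⟩ := Set.nonempty_iff_ne_empty.2 hJ
  obtain ⟨j0', hj0'⟩ := Set.nonempty_iff_ne_empty.2 hJ'
  have he : j0 = j0' := key j0 hj0 j0' hj0'
  subst he
  refine Or.inr (Or.inr ⟨j0, ?_, ?_⟩)
  · ext y
    simp only [Set.mem_singleton_iff]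
    exact ⟨fun hy => key y hy j0 hj0', fun hy => hy ▸ hj0⟩
  · ext y
    simp only [Set.mem_singleton_iff]
    exact ⟨fun hy => (key j0 hj0 y hy).symm, fun hy => hy ▸ hj0'⟩

open scoped Classical in
lemma rowcol_disj {i j : n} {J I : Set n}
    (h : {σ : Equiv.Perm n | σ i ∈ J} ∩ {σ : Equiv.Perm n | σ.symm j ∈ I} = ∅) :
    J = ∅ ∨ I = ∅ ∨ (J = {j} ∧ i ∉ I) ∨ (I = {i} ∧ j ∉ J) := by
  have hmem : ∀ σ : Equiv.Perm n, ¬(σ i ∈ J ∧ σ.symm j ∈ I) := by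
    intro σ hσ
    have : σ ∈ ({σ : Equiv.Perm n | σ i ∈ J} ∩ {σ : Equiv.Perm n | σ.symm j ∈ I}) := hσ
    rw [h] at this; exact this
  have hnotboth : ¬(j ∈ J ∧ i ∈ I) := by
    rintro ⟨hj, hi⟩
    obtain ⟨σ, hσ⟩ := perm1 i j
    refine hmem σ ⟨by rw [hσ]; exact hj, ?_⟩
    rw [← hσ, Equiv.symm_apply_apply]; exact hi
  by_cases hJ : J = ∅
  · exact Or.inl hJ
  by_cases hI : I = ∅
  · exact Or.inr (Or.inl hI)
  obtain ⟨j0, hj0⟩ := Set.nonempty_iff_ne_empty.2 hJ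
  obtain ⟨i0, hi0⟩ := Set.nonempty_iff_ne_empty.2 hI
  have claim : (∀ j1 ∈ J, j1 = j) ∨ (∀ i1 ∈ I, i1 = i) := by
    by_contra hc
    push_neg at hc
    obtain ⟨⟨j1, hj1, hj1ne⟩, ⟨i1, hi1, hi1ne⟩⟩ := hc
    obtain ⟨σ, h1, h2⟩ := perm2 (Ne.symm hi1ne) hj1ne
    refine hmem σ ⟨by rw [h1]; exact hj1, ?_⟩
    rw [← h2, Equiv.symm_apply_apply]; exact hi1
  rcases claim with hc | hc
  · have hJeq : J = {j} := by
      ext y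
      simp only [Set.mem_singleton_iff]
      refine ⟨fun hy => hc y hy, fun hy => ?_⟩
      rw [hy, ← hc j0 hj0]; exact hj0
    refine Or.inr (Or.inr (Or.inl ⟨hJeq, fun hiI => ?_⟩))
    exact hnotboth ⟨hJeq ▸ rfl, hiI⟩
  · have hIeq : I = {i} := by
      ext y
      simp only [Set.mem_singleton_iff]
      refine ⟨fun hy => hc y hy, fun hy => ?_⟩
      rw [hy, ← hc i0 hi0]; exact hi0
    refine Or.inr (Or.inr (Or.inr ⟨hIeq, fun hjJ => ?_⟩))
    exact hnotboth ⟨hjJ, hIeq ▸ rfl⟩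

lemma colcol_disj_same {j : n} {I I' : Set n}
    (h : {σ : Equiv.Perm n | σ.symm j ∈ I} ∩ {σ : Equiv.Perm n | σ.symm j ∈ I'} = ∅) :
    I ∩ I' = ∅ :=
  rowrow_disj_same (symm_set_disj h)

lemma colcol_disj {j j' : n} {I I' : Set n} (hjj' : j ≠ j')
    (h : {σ : Equiv.Perm n | σ.symm j ∈ I} ∩ {σ : Equiv.Perm n | σ.symm j' ∈ I'} = ∅) :
    I = ∅ ∨ I' = ∅ ∨ ∃ i0, I = {i0} ∧ I' = {i0} :=
  rowrow_disj hjj' (symm_set_disj h)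

end Disj

section Comp3
variable {n : Type}

open scoped Classical

lemma eqv_rowcol_of_theta (h3 : ∀ x y : n, ∃ z : n, z ≠ x ∧ z ≠ y) {i j : n} {J I : Set n}
    (h : {σ : Equiv.Perm n | σ i ∈ J} = {σ : Equiv.Perm n | σ.symm j ∈ I}) :
    eqv ({i} ×ˢ J) (I ×ˢ ({j} : Set n)) := by
  rcases rowcol_eq h3 h with ⟨h1, h2⟩ | ⟨h1, h2⟩ | ⟨h1, h2⟩ | ⟨h1, h2⟩ <;> subst h1 <;> subst h2
  · exact eqv_of_eq (by rw [Set.prod_empty, Set.empty_prod])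
  · exact eqv_row_univ_col i j
  · exact eqv_of_eq rfl
  · exact eqv_row_compl_col i j

lemma eqv_iff_theta (h3 : ∀ x y : n, ∃ z : n, z ≠ x ∧ z ≠ y) (hne : Nonempty n)
    {S T : Set (n × n)} (hS : Axial S) (hT : Axial T) :
    eqv S T ↔ theta S = theta T := by
  constructor
  · exact eqv_theta
  intro h
  obtain ⟨x0⟩ := hne
  rcases hS with ⟨i, J, rfl⟩ | ⟨I, j, rfl⟩ <;> rcases hT with ⟨i', J', rfl⟩ | ⟨I', j', rfl⟩
  · rw [theta_row, theta_row] at h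
    by_cases hii : i = i'
    · subst hii
      exact eqv_of_eq (by rw [rowrow_eq_same h])
    · rcases rowrow_eq h3 hii h with ⟨h1, h2⟩ | ⟨h1, h2⟩ <;> subst h1 <;> subst h2
      · exact eqv_of_eq (by rw [Set.prod_empty, Set.prod_empty])
      · exact eqv_trans (eqv_row_univ_col i x0) (eqv_symm (eqv_row_univ_col i' x0))
  · rw [theta_row, theta_col] at h
    exact eqv_rowcol_of_theta h3 h
  · rw [theta_col, theta_row] at h
    exact eqv_symm (eqv_rowcol_of_theta h3 h.symm)
  · rw [theta_col, theta_col] at h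
    by_cases hjj : j = j'
    · subst hjj
      exact eqv_of_eq (by rw [colcol_eq_same h])
    · rcases colcol_eq h3 hjj h with ⟨h1, h2⟩ | ⟨h1, h2⟩ <;> subst h1 <;> subst h2
      · exact eqv_of_eq (by rw [Set.empty_prod, Set.empty_prod])
      · exact eqv_trans (eqv_symm (eqv_row_univ_col x0 j)) (eqv_row_univ_col x0 j')

end Comp3

section Comp5
variable {n : Type}

open scoped Classical

lemma qDefined_symm {S T : Set (n × n)} (h : qDefined S T) : qDefined T S := by
  obtain ⟨S', T', h1, h2, h3, h4, h5, h6⟩ := h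
  exact ⟨T', S', h2, h1, h4, h3, by rw [Set.inter_comm]; exact h5,
    by rw [Set.union_comm]; exact h6⟩

lemma qdef_of_empty_left {S T : Set (n × n)} (hS : S = ∅) (hT : Axial T) (x : n) :
    qDefined S T := by
  refine ⟨∅, T, axial_empty x, hT, eqv_of_eq hS, eqv_of_eq rfl, Set.empty_inter T, ?_⟩
  rw [Set.empty_union]; exact hT

lemma qdef_rowcol {i j : n} {J I : Set n}
    (h : {σ : Equiv.Perm n | σ i ∈ J} ∩ {σ : Equiv.Perm n | σ.symm j ∈ I} = ∅) :
    qDefined ({i} ×ˢ J) (I ×ˢ ({j} : Set n)) := by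
  rcases rowcol_disj h with h1 | h1 | ⟨h1, h2⟩ | ⟨h1, h2⟩
  · exact qdef_of_empty_left (by rw [h1, Set.prod_empty]) (Or.inr ⟨I, j, rfl⟩) i
  · exact qDefined_symm
      (qdef_of_empty_left (by rw [h1, Set.empty_prod]) (Or.inl ⟨i, J, rfl⟩) i)
  · subst h1
    refine ⟨({i} : Set n) ×ˢ ({j} : Set n), I ×ˢ ({j} : Set n),
      Or.inr ⟨{i}, j, rfl⟩, Or.inr ⟨I, j, rfl⟩, eqv_of_eq rfl, eqv_of_eq rfl, ?_, ?_⟩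
    · rw [Set.prod_inter_prod, Set.singleton_inter_eq_empty.2 h2, Set.empty_prod]
    · rw [← Set.union_prod]
      exact Or.inr ⟨{i} ∪ I, j, rfl⟩
  · subst h1
    refine ⟨({i} : Set n) ×ˢ J, ({i} : Set n) ×ˢ ({j} : Set n),
      Or.inl ⟨i, J, rfl⟩, Or.inl ⟨i, {j}, rfl⟩, eqv_of_eq rfl, eqv_of_eq rfl, ?_, ?_⟩
    · rw [Set.prod_inter_prod, Set.inter_singleton_eq_empty.2 h2, Set.prod_empty]
    · rw [← Set.prod_union]
      exact Or.inl ⟨i, J ∪ {j}, rfl⟩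

lemma qDefined_iff {S T : Set (n × n)}
    (hS : Axial S) (hT : Axial T) :
    qDefined S T ↔ theta S ∩ theta T = ∅ := by
  constructor
  · rintro ⟨S', T', _, _, heS, heT, hdisj, hax⟩
    rw [eqv_theta heS, eqv_theta heT]
    exact disj_of_union_axial hdisj hax
  intro h
  rcases hS with ⟨i, J, rfl⟩ | ⟨I, j, rfl⟩ <;> rcases hT with ⟨i', J', rfl⟩ | ⟨I', j', rfl⟩
  · rw [theta_row, theta_row] at h
    by_cases hii : i = i'
    · subst hii
      have hJJ' := rowrow_disj_same h
      refine ⟨{i} ×ˢ J, {i} ×ˢ J', Or.inl ⟨i, J, rfl⟩, Or.inl ⟨i, J', rfl⟩,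
        eqv_of_eq rfl, eqv_of_eq rfl, ?_, ?_⟩
      · rw [Set.prod_inter_prod, hJJ', Set.prod_empty]
      · rw [← Set.prod_union]
        exact Or.inl ⟨i, J ∪ J', rfl⟩
    · rcases rowrow_disj hii h with h1 | h1 | ⟨j0, h1, h2⟩
      · exact qdef_of_empty_left (by rw [h1, Set.prod_empty]) (Or.inl ⟨i', J', rfl⟩) i
      · exact qDefined_symm
          (qdef_of_empty_left (by rw [h1, Set.prod_empty]) (Or.inl ⟨i, J, rfl⟩) i)
      · subst h1; subst h2
        refine ⟨({i} : Set n) ×ˢ ({j0} : Set n), ({i'} : Set n) ×ˢ ({j0} : Set n),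
          Or.inr ⟨{i}, j0, rfl⟩, Or.inr ⟨{i'}, j0, rfl⟩, eqv_of_eq rfl, eqv_of_eq rfl, ?_, ?_⟩
        · rw [Set.prod_inter_prod,
            Set.singleton_inter_eq_empty.2 (by simpa using hii), Set.empty_prod]
        · rw [← Set.union_prod]
          exact Or.inr ⟨{i} ∪ {i'}, j0, rfl⟩
  · rw [theta_row, theta_col] at h
    exact qdef_rowcol h
  · rw [theta_col, theta_row] at h
    exact qDefined_symm (qdef_rowcol (by rw [Set.inter_comm]; exact h))
  · rw [theta_col, theta_col] at h
    by_cases hjj : j = j'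
    · subst hjj
      have hII' := colcol_disj_same h
      refine ⟨I ×ˢ ({j} : Set n), I' ×ˢ ({j} : Set n), Or.inr ⟨I, j, rfl⟩,
        Or.inr ⟨I', j, rfl⟩, eqv_of_eq rfl, eqv_of_eq rfl, ?_, ?_⟩
      · rw [Set.prod_inter_prod, hII', Set.empty_prod]
      · rw [← Set.union_prod]
        exact Or.inr ⟨I ∪ I', j, rfl⟩
    · rcases colcol_disj hjj h with h1 | h1 | ⟨i0, h1, h2⟩
      · exact qdef_of_empty_left (by rw [h1, Set.empty_prod]) (Or.inr ⟨I', j', rfl⟩) j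
      · exact qDefined_symm
          (qdef_of_empty_left (by rw [h1, Set.empty_prod]) (Or.inr ⟨I, j, rfl⟩) j)
      · subst h1; subst h2
        refine ⟨({i0} : Set n) ×ˢ ({j} : Set n), ({i0} : Set n) ×ˢ ({j'} : Set n),
          Or.inl ⟨i0, {j}, rfl⟩, Or.inl ⟨i0, {j'}, rfl⟩, eqv_of_eq rfl, eqv_of_eq rfl, ?_, ?_⟩
        · rw [Set.prod_inter_prod,
            show ({j} : Set n) ∩ {j'} = ∅ from Set.singleton_inter_eq_empty.2 (by simpa using hjj),
            Set.prod_empty]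
        · rw [← Set.prod_union]
          exact Or.inl ⟨i0, {j} ∪ {j'}, rfl⟩

end Comp5

section Lesim
variable {n : Type}

open scoped Classical

lemma qLesim_theta_sub {S T : Set (n × n)} (h : qLesim S T) : theta S ⊆ theta T := by
  rcases h with h | ⟨S', C, _, _, heS, _, _, heU⟩
  · rw [eqv_theta h]
  · rw [eqv_theta heS, ← eqv_theta heU]
    exact theta_mono Set.subset_union_left

lemma qLesim_empty {S b : Set (n × n)} (hS : S = ∅) (hb : Axial b) (x : n) :
    qLesim S b :=
  Or.inr ⟨∅, b, axial_empty x, hb, eqv_of_eq hS, Set.empty_inter b,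
    by rw [Set.empty_union]; exact hb, eqv_of_eq (Set.empty_union b)⟩

lemma eq_singleton_of_forall {α : Type*} {J : Set α} {x : α}
    (h : ∀ y ∈ J, y = x) (hne : J ≠ ∅) : J = {x} := by
  obtain ⟨j0, hj0⟩ := Set.nonempty_iff_ne_empty.2 hne
  ext y
  simp only [Set.mem_singleton_iff]
  exact ⟨fun hy => h y hy, fun hy => hy ▸ ((h j0 hj0) ▸ hj0)⟩

lemma qLesim_row {i x : n} {S : Set (n × n)} (hS : Axial S)
    (hsub : theta S ⊆ {σ : Equiv.Perm n | σ i ∈ ({x}ᶜ : Set n)}) :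
    qLesim S ({i} ×ˢ ({x}ᶜ : Set n)) := by
  have hbax : Axial ({i} ×ˢ ({x}ᶜ : Set n)) := Or.inl ⟨i, {x}ᶜ, rfl⟩
  rcases hS with ⟨i', J, rfl⟩ | ⟨I, j, rfl⟩
  · rw [theta_row] at hsub
    by_cases hJ : J = ∅
    · exact qLesim_empty (by rw [hJ, Set.prod_empty]) hbax i
    by_cases hii : i' = i
    · subst hii
      have hJsub : J ⊆ ({x}ᶜ : Set n) := by
        intro j1 hj1
        obtain ⟨σ, hσ⟩ := perm1 i' j1
        have := hsub (by rw [Set.mem_setOf_eq, hσ]; exact hj1)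
        rwa [Set.mem_setOf_eq, hσ] at this
      refine Or.inr ⟨{i'} ×ˢ J, {i'} ×ˢ (({x}ᶜ : Set n) \ J), Or.inl ⟨i', J, rfl⟩,
        Or.inl ⟨i', ({x}ᶜ : Set n) \ J, rfl⟩, eqv_of_eq rfl, ?_, ?_, ?_⟩
      · rw [Set.prod_inter_prod, Set.inter_diff_self, Set.prod_empty]
      · rw [← Set.prod_union]
        exact Or.inl ⟨i', J ∪ (({x}ᶜ : Set n) \ J), rfl⟩
      · rw [← Set.prod_union, Set.union_diff_cancel hJsub]
        exact eqv_of_eq rfl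
    · have hJeq : J = {x} := by
        refine eq_singleton_of_forall (fun j1 hj1 => ?_) hJ
        by_contra hne
        obtain ⟨σ, h1, h2⟩ := perm2 hii hne
        have := hsub (by rw [Set.mem_setOf_eq, h1]; exact hj1)
        rw [Set.mem_setOf_eq, h2] at this
        exact this rfl
      subst hJeq
      refine Or.inr ⟨({i'} : Set n) ×ˢ ({x} : Set n), (({i}ᶜ : Set n) \ {i'}) ×ˢ ({x} : Set n),
        Or.inr ⟨{i'}, x, rfl⟩, Or.inr ⟨({i}ᶜ : Set n) \ {i'}, x, rfl⟩, eqv_of_eq rfl, ?_, ?_, ?_⟩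
      · rw [Set.prod_inter_prod,
          show ({i'} : Set n) ∩ (({i}ᶜ : Set n) \ {i'}) = ∅ from Set.inter_diff_self _ _,
          Set.empty_prod]
      · rw [← Set.union_prod]
        exact Or.inr ⟨{i'} ∪ (({i}ᶜ : Set n) \ {i'}), x, rfl⟩
      · rw [← Set.union_prod, Set.union_diff_cancel (by simpa using Ne.symm hii)]
        exact eqv_symm (eqv_row_compl_col i x)
  · rw [theta_col] at hsub
    by_cases hI : I = ∅
    · exact qLesim_empty (by rw [hI, Set.empty_prod]) hbax i
    by_cases hjx : j = x
    · subst hjx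
      have hIsub : I ⊆ ({i}ᶜ : Set n) := by
        intro i1 hi1
        obtain ⟨σ, hσ⟩ := perm1 i1 j
        have hs : σ.symm j = i1 := by rw [← hσ, Equiv.symm_apply_apply]
        have := hsub (by rw [Set.mem_setOf_eq, hs]; exact hi1)
        rw [Set.mem_setOf_eq, Set.mem_compl_iff, Set.mem_singleton_iff] at this
        simp only [Set.mem_compl_iff, Set.mem_singleton_iff]
        intro hii
        subst hii
        exact this hσ
      refine Or.inr ⟨I ×ˢ ({j} : Set n), (({i}ᶜ : Set n) \ I) ×ˢ ({j} : Set n),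
        Or.inr ⟨I, j, rfl⟩, Or.inr ⟨({i}ᶜ : Set n) \ I, j, rfl⟩, eqv_of_eq rfl, ?_, ?_, ?_⟩
      · rw [Set.prod_inter_prod, Set.inter_diff_self, Set.empty_prod]
      · rw [← Set.union_prod]
        exact Or.inr ⟨I ∪ (({i}ᶜ : Set n) \ I), j, rfl⟩
      · rw [← Set.union_prod, Set.union_diff_cancel hIsub]
        exact eqv_symm (eqv_row_compl_col i j)
    · have hIeq : I = {i} := by
        refine eq_singleton_of_forall (fun i1 hi1 => ?_) hI
        by_contra hne
        obtain ⟨σ, h1, h2⟩ := perm2 (Ne.symm hne) (Ne.symm hjx)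
        have hs : σ.symm j = i1 := by rw [← h2, Equiv.symm_apply_apply]
        have := hsub (by rw [Set.mem_setOf_eq, hs]; exact hi1)
        rw [Set.mem_setOf_eq, h1] at this
        exact this rfl
      subst hIeq
      have hjsub : ({j} : Set n) ⊆ ({x}ᶜ : Set n) := by simpa using Ne.symm hjx
      refine Or.inr ⟨({i} : Set n) ×ˢ ({j} : Set n), ({i} : Set n) ×ˢ (({x}ᶜ : Set n) \ {j}),
        Or.inl ⟨i, {j}, rfl⟩, Or.inl ⟨i, ({x}ᶜ : Set n) \ {j}, rfl⟩, eqv_of_eq rfl, ?_, ?_, ?_⟩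
      · rw [Set.prod_inter_prod,
          show ({j} : Set n) ∩ (({x}ᶜ : Set n) \ {j}) = ∅ from Set.inter_diff_self _ _,
          Set.prod_empty]
      · rw [← Set.prod_union]
        exact Or.inl ⟨i, {j} ∪ (({x}ᶜ : Set n) \ {j}), rfl⟩
      · rw [← Set.prod_union, Set.union_diff_cancel hjsub]
        exact eqv_of_eq rfl

lemma qLesim_col {j y : n} {S : Set (n × n)} (hS : Axial S)
    (hsub : theta S ⊆ {σ : Equiv.Perm n | σ.symm j ∈ ({y}ᶜ : Set n)}) :
    qLesim S (({y}ᶜ : Set n) ×ˢ ({j} : Set n)) := by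
  have hbax : Axial (({y}ᶜ : Set n) ×ˢ ({j} : Set n)) := Or.inr ⟨{y}ᶜ, j, rfl⟩
  rcases hS with ⟨i', J, rfl⟩ | ⟨I, j', rfl⟩
  · rw [theta_row] at hsub
    by_cases hJ : J = ∅
    · exact qLesim_empty (by rw [hJ, Set.prod_empty]) hbax j
    by_cases hiy : i' = y
    · subst hiy
      have hJsub : J ⊆ ({j}ᶜ : Set n) := by
        intro j1 hj1
        simp only [Set.mem_compl_iff, Set.mem_singleton_iff]
        intro hj1j
        obtain ⟨σ, hσ⟩ := perm1 i' j
        have hs : σ.symm j = i' := by rw [← hσ, Equiv.symm_apply_apply]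
        have hmem : σ i' ∈ J := by rw [hσ, ← hj1j]; exact hj1
        have := hsub hmem
        rw [Set.mem_setOf_eq, hs] at this
        exact this rfl
      refine Or.inr ⟨{i'} ×ˢ J, {i'} ×ˢ (({j}ᶜ : Set n) \ J), Or.inl ⟨i', J, rfl⟩,
        Or.inl ⟨i', ({j}ᶜ : Set n) \ J, rfl⟩, eqv_of_eq rfl, ?_, ?_, ?_⟩
      · rw [Set.prod_inter_prod, Set.inter_diff_self, Set.prod_empty]
      · rw [← Set.prod_union]
        exact Or.inl ⟨i', J ∪ (({j}ᶜ : Set n) \ J), rfl⟩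
      · rw [← Set.prod_union, Set.union_diff_cancel hJsub]
        exact eqv_row_compl_col i' j
    · have hJeq : J = {j} := by
        refine eq_singleton_of_forall (fun j1 hj1 => ?_) hJ
        by_contra hne
        obtain ⟨σ, h1, h2⟩ := perm2 hiy hne
        have hs : σ.symm j = y := by rw [← h2, Equiv.symm_apply_apply]
        have := hsub (by rw [Set.mem_setOf_eq, h1]; exact hj1)
        rw [Set.mem_setOf_eq, hs] at this
        exact this rfl
      subst hJeq
      refine Or.inr ⟨({i'} : Set n) ×ˢ ({j} : Set n), (({y}ᶜ : Set n) \ {i'}) ×ˢ ({j} : Set n),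
        Or.inr ⟨{i'}, j, rfl⟩, Or.inr ⟨({y}ᶜ : Set n) \ {i'}, j, rfl⟩, eqv_of_eq rfl, ?_, ?_, ?_⟩
      · rw [Set.prod_inter_prod,
          show ({i'} : Set n) ∩ (({y}ᶜ : Set n) \ {i'}) = ∅ from Set.inter_diff_self _ _,
          Set.empty_prod]
      · rw [← Set.union_prod]
        exact Or.inr ⟨{i'} ∪ (({y}ᶜ : Set n) \ {i'}), j, rfl⟩
      · rw [← Set.union_prod, Set.union_diff_cancel (by simpa using Ne.symm hiy)]
        exact eqv_of_eq rfl
  · rw [theta_col] at hsub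
    by_cases hI : I = ∅
    · exact qLesim_empty (by rw [hI, Set.empty_prod]) hbax j
    by_cases hjj : j' = j
    · subst hjj
      have hIsub : I ⊆ ({y}ᶜ : Set n) := by
        intro i1 hi1
        obtain ⟨σ, hσ⟩ := perm1 i1 j'
        have hs : σ.symm j' = i1 := by rw [← hσ, Equiv.symm_apply_apply]
        have := hsub (by rw [Set.mem_setOf_eq, hs]; exact hi1)
        rwa [Set.mem_setOf_eq, hs] at this
      refine Or.inr ⟨I ×ˢ ({j'} : Set n), (({y}ᶜ : Set n) \ I) ×ˢ ({j'} : Set n),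
        Or.inr ⟨I, j', rfl⟩, Or.inr ⟨({y}ᶜ : Set n) \ I, j', rfl⟩, eqv_of_eq rfl, ?_, ?_, ?_⟩
      · rw [Set.prod_inter_prod, Set.inter_diff_self, Set.empty_prod]
      · rw [← Set.union_prod]
        exact Or.inr ⟨I ∪ (({y}ᶜ : Set n) \ I), j', rfl⟩
      · rw [← Set.union_prod, Set.union_diff_cancel hIsub]
        exact eqv_of_eq rfl
    · have hIeq : I = {y} := by
        refine eq_singleton_of_forall (fun i1 hi1 => ?_) hI
        by_contra hne
        obtain ⟨σ, h1, h2⟩ := perm2 hne hjj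
        have hs1 : σ.symm j' = i1 := by rw [← h1, Equiv.symm_apply_apply]
        have hs2 : σ.symm j = y := by rw [← h2, Equiv.symm_apply_apply]
        have := hsub (by rw [Set.mem_setOf_eq, hs1]; exact hi1)
        rw [Set.mem_setOf_eq, hs2] at this
        exact this rfl
      subst hIeq
      have hjsub : ({j'} : Set n) ⊆ ({j}ᶜ : Set n) := by simpa using Ne.symm hjj
      refine Or.inr ⟨({y} : Set n) ×ˢ ({j'} : Set n), ({y} : Set n) ×ˢ (({j}ᶜ : Set n) \ {j'}),
        Or.inl ⟨y, {j'}, rfl⟩, Or.inl ⟨y, ({j}ᶜ : Set n) \ {j'}, rfl⟩, eqv_of_eq rfl, ?_, ?_, ?_⟩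
      · rw [Set.prod_inter_prod,
          show ({j'} : Set n) ∩ (({j}ᶜ : Set n) \ {j'}) = ∅ from Set.inter_diff_self _ _,
          Set.prod_empty]
      · rw [← Set.prod_union]
        exact Or.inl ⟨y, {j'} ∪ (({j}ᶜ : Set n) \ {j'}), rfl⟩
      · rw [← Set.prod_union, Set.union_diff_cancel hjsub]
        exact eqv_row_compl_col y j

end Lesim

section Complete
variable {n : Type}

open scoped Classical

lemma exists_bound (h3 : ∀ x y : n, ∃ z : n, z ≠ x ∧ z ≠ y) (hne : Nonempty n)
    (𝒮 : Set (Set (n × n))) (hax : ∀ S ∈ 𝒮, Axial S)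
    (hpair : ∀ S ∈ 𝒮, ∀ T ∈ 𝒮, theta S = theta T ∨ theta S ∩ theta T = ∅)
    (σ0 : Equiv.Perm n) (hσ0 : ∀ S ∈ 𝒮, σ0 ∉ theta S) :
    ∃ b : Set (n × n), Axial b ∧ (∀ S ∈ 𝒮, qLesim S b) ∧ σ0 ∉ theta b := by
  obtain ⟨x0⟩ := hne
  by_cases hrowbig : ∃ S ∈ 𝒮, ∃ (i : n) (J : Set n), theta S = {σ : Equiv.Perm n | σ i ∈ J} ∧
      ∃ j1 ∈ J, ∃ j2 ∈ J, j1 ≠ j2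
  · obtain ⟨S0, hS0mem, i0, J0, hθ0, j1, hj1, j2, hj2, hj12⟩ := hrowbig
    refine ⟨{i0} ×ˢ ({σ0 i0}ᶜ : Set n), Or.inl ⟨i0, {σ0 i0}ᶜ, rfl⟩, ?_, ?_⟩
    swap
    · rw [theta_row]; simp
    intro S hSmem
    refine qLesim_row (hax S hSmem) ?_
    rcases hax S hSmem with ⟨i, J, hSr⟩ | ⟨I, j, hSc⟩
    · have hθS : theta S = {σ : Equiv.Perm n | σ i ∈ J} := by rw [hSr, theta_row]
      rw [hθS]
      intro σ hσmem
      simp only [Set.mem_setOf_eq, Set.mem_compl_iff, Set.mem_singleton_iff]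
      intro heq
      by_cases hi : i = i0
      · subst hi
        have hσ0nJ : σ0 i ∉ J := by
          have := hσ0 S hSmem
          rw [hθS] at this
          exact this
        exact hσ0nJ (heq ▸ hσmem)
      · rcases hpair S0 hS0mem S hSmem with hp | hp
        · rw [hθ0, hθS] at hp
          rcases rowrow_eq h3 (fun h => hi h.symm) hp with ⟨hJ0, _⟩ | ⟨_, hJu⟩
          · rw [hJ0] at hj1; exact hj1
          · have := hσ0 S hSmem
            rw [hθS, hJu] at this
            exact this (Set.mem_univ _)
        · rw [hθ0, hθS] at hp
          have hex : ∃ j' ∈ J0, j' ≠ σ i := by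
            by_cases hj1e : j1 = σ i
            · exact ⟨j2, hj2, fun h => hj12 (hj1e.trans h.symm) |>.elim⟩
            · exact ⟨j1, hj1, hj1e⟩
          obtain ⟨j', hj'J0, hj'⟩ := hex
          obtain ⟨σ', h1', h2'⟩ := perm2 (fun h => hi h.symm) hj'
          have : σ' ∈ ({σ : Equiv.Perm n | σ i0 ∈ J0} ∩ {σ : Equiv.Perm n | σ i ∈ J}) :=
            ⟨by rw [Set.mem_setOf_eq, h1']; exact hj'J0,
             by rw [Set.mem_setOf_eq, h2']; exact hσmem⟩
          rw [hp] at this; exact this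
    · have hθS : theta S = {σ : Equiv.Perm n | σ.symm j ∈ I} := by rw [hSc, theta_col]
      rw [hθS]
      intro σ hσmem
      simp only [Set.mem_setOf_eq, Set.mem_compl_iff, Set.mem_singleton_iff] at hσmem ⊢
      intro heq
      by_cases hIi0 : I = {i0}
      · have hσi0 : σ i0 = j := by
          rw [hIi0] at hσmem
          have : σ.symm j = i0 := hσmem
          rw [← this, Equiv.apply_symm_apply]
        have hσ0i0 : σ0 i0 ≠ j := by
          intro hc
          have := hσ0 S hSmem
          rw [hθS] at this
          apply this
          rw [Set.mem_setOf_eq, ← hc, Equiv.symm_apply_apply, hIi0]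
          rfl
        exact hσ0i0 (heq ▸ hσi0)
      · rcases hpair S0 hS0mem S hSmem with hp | hp
        · rw [hθ0, hθS] at hp
          have hσJ0 : σ i0 ∈ J0 := (Set.ext_iff.1 hp σ).2 hσmem
          have hσ0nJ0 : σ0 i0 ∉ J0 := by
            have := hσ0 S0 hS0mem
            rw [hθ0] at this
            exact this
          exact hσ0nJ0 (heq ▸ hσJ0)
        · rw [hθ0, hθS] at hp
          have hex1 : ∃ i1' ∈ I, i1' ≠ i0 := by
            by_contra hc
            push_neg at hc
            refine hIi0 (eq_singleton_of_forall hc ?_)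
            exact fun h => (h ▸ hσmem : σ.symm j ∈ (∅ : Set n))
          obtain ⟨i1', hi1'I, hi1'⟩ := hex1
          have hex : ∃ j' ∈ J0, j' ≠ j := by
            by_cases hj1e : j1 = j
            · exact ⟨j2, hj2, fun h => hj12 (hj1e.trans h.symm) |>.elim⟩
            · exact ⟨j1, hj1, hj1e⟩
          obtain ⟨j', hj'J0, hj'⟩ := hex
          obtain ⟨σ', h1', h2'⟩ := perm2 (Ne.symm hi1') hj'
          have hs : σ'.symm j = i1' := by rw [← h2', Equiv.symm_apply_apply]
          have : σ' ∈ ({σ : Equiv.Perm n | σ i0 ∈ J0} ∩ {σ : Equiv.Perm n | σ.symm j ∈ I}) :=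
            ⟨by rw [Set.mem_setOf_eq, h1']; exact hj'J0,
             by rw [Set.mem_setOf_eq, hs]; exact hi1'I⟩
          rw [hp] at this; exact this
  by_cases hcolbig : ∃ S ∈ 𝒮, ∃ (I : Set n) (j : n), theta S = {σ : Equiv.Perm n | σ.symm j ∈ I} ∧
      ∃ i1 ∈ I, ∃ i2 ∈ I, i1 ≠ i2
  · obtain ⟨S0, hS0mem, I0, j0, hθ0, i1, hi1, i2, hi2, hi12⟩ := hcolbig
    refine ⟨({σ0.symm j0}ᶜ : Set n) ×ˢ ({j0} : Set n), Or.inr ⟨{σ0.symm j0}ᶜ, j0, rfl⟩, ?_, ?_⟩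
    swap
    · rw [theta_col]; simp
    intro S hSmem
    refine qLesim_col (hax S hSmem) ?_
    rcases hax S hSmem with ⟨i, J, hSr⟩ | ⟨I, j, hSc⟩
    · have hθS : theta S = {σ : Equiv.Perm n | σ i ∈ J} := by rw [hSr, theta_row]
      rw [hθS]
      intro σ hσmem
      simp only [Set.mem_setOf_eq, Set.mem_compl_iff, Set.mem_singleton_iff] at hσmem ⊢
      intro heq
      by_cases hJj0 : J = {j0}
      · have hσij0 : σ i = j0 := by rw [hJj0] at hσmem; exact hσmem
        have hs : σ.symm j0 = i := by rw [← hσij0, Equiv.symm_apply_apply]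
        have hσ0i : σ0 i ≠ j0 := by
          intro hc
          have := hσ0 S hSmem
          rw [hθS] at this
          exact this (by rw [Set.mem_setOf_eq, hc, hJj0]; rfl)
        apply hσ0i
        have hs0 : σ0.symm j0 = i := heq ▸ hs
        rw [← hs0, Equiv.apply_symm_apply]
      · rcases hpair S0 hS0mem S hSmem with hp | hp
        · rw [hθ0, hθS] at hp
          have hσI0 : σ.symm j0 ∈ I0 := (Set.ext_iff.1 hp σ).2 hσmem
          have hσ0nI0 : σ0.symm j0 ∉ I0 := by
            have := hσ0 S0 hS0mem
            rw [hθ0] at this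
            exact this
          exact hσ0nI0 (heq ▸ hσI0)
        · rw [hθ0, hθS] at hp
          have hexj : ∃ j' ∈ J, j' ≠ j0 := by
            by_contra hc
            push_neg at hc
            refine hJj0 (eq_singleton_of_forall hc ?_)
            exact fun h => (h ▸ hσmem : σ i ∈ (∅ : Set n))
          obtain ⟨j', hj'J, hj'⟩ := hexj
          have hexi : ∃ i' ∈ I0, i' ≠ i := by
            by_cases hi1e : i1 = i
            · exact ⟨i2, hi2, fun h => hi12 (hi1e.trans h.symm) |>.elim⟩
            · exact ⟨i1, hi1, hi1e⟩
          obtain ⟨i', hi'I0, hi'⟩ := hexi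
          obtain ⟨σ', h1', h2'⟩ := perm2 (Ne.symm hi') hj'
          have hs : σ'.symm j0 = i' := by rw [← h2', Equiv.symm_apply_apply]
          have : σ' ∈ ({σ : Equiv.Perm n | σ.symm j0 ∈ I0} ∩ {σ : Equiv.Perm n | σ i ∈ J}) :=
            ⟨by rw [Set.mem_setOf_eq, hs]; exact hi'I0,
             by rw [Set.mem_setOf_eq, h1']; exact hj'J⟩
          rw [hp] at this; exact this
    · have hθS : theta S = {σ : Equiv.Perm n | σ.symm j ∈ I} := by rw [hSc, theta_col]
      rw [hθS]
      intro σ hσmem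
      simp only [Set.mem_setOf_eq, Set.mem_compl_iff, Set.mem_singleton_iff] at hσmem ⊢
      intro heq
      by_cases hj : j = j0
      · subst hj
        have hσ0nI : σ0.symm j ∉ I := by
          have := hσ0 S hSmem
          rw [hθS] at this
          exact this
        exact hσ0nI (heq ▸ hσmem)
      · rcases hpair S0 hS0mem S hSmem with hp | hp
        · rw [hθ0, hθS] at hp
          have hσI0 : σ.symm j0 ∈ I0 := (Set.ext_iff.1 hp σ).2 hσmem
          have hσ0nI0 : σ0.symm j0 ∉ I0 := by
            have := hσ0 S0 hS0mem
            rw [hθ0] at this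
            exact this
          exact hσ0nI0 (heq ▸ hσI0)
        · rw [hθ0, hθS] at hp
          have hexi : ∃ i' ∈ I0, i' ≠ σ.symm j := by
            by_cases hi1e : i1 = σ.symm j
            · exact ⟨i2, hi2, fun h => hi12 (hi1e.trans h.symm) |>.elim⟩
            · exact ⟨i1, hi1, hi1e⟩
          obtain ⟨i', hi'I0, hi'⟩ := hexi
          obtain ⟨σ', h1', h2'⟩ := perm2 hi' (Ne.symm hj)
          have hs1 : σ'.symm j0 = i' := by rw [← h1', Equiv.symm_apply_apply]
          have hs2 : σ'.symm j = σ.symm j := by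
            rw [Equiv.symm_apply_eq]; exact h2'.symm
          have : σ' ∈ ({σ : Equiv.Perm n | σ.symm j0 ∈ I0} ∩ {σ : Equiv.Perm n | σ.symm j ∈ I}) :=
            ⟨by rw [Set.mem_setOf_eq, hs1]; exact hi'I0,
             by rw [Set.mem_setOf_eq, hs2]; exact hσmem⟩
          rw [hp] at this; exact this
  -- neither big: all nonempty theta-images are of singleton form
  · have hP : ∀ S ∈ 𝒮, theta S = ∅ ∨ ∃ i j : n, theta S = {σ : Equiv.Perm n | σ i = j} := by
      intro S hSmem
      rcases hax S hSmem with ⟨i, J, hSr⟩ | ⟨I, j, hSc⟩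
      · have hθS : theta S = {σ : Equiv.Perm n | σ i ∈ J} := by rw [hSr, theta_row]
        by_cases hJ : J = ∅
        · left; rw [hθS, hJ]; ext σ; simp
        · right
          have hsing : ∀ y ∈ J, ∀ z ∈ J, y = z := by
            intro y hy z hz
            by_contra hyz
            exact hrowbig ⟨S, hSmem, i, J, hθS, y, hy, z, hz, hyz⟩
          obtain ⟨j0, hj0⟩ := Set.nonempty_iff_ne_empty.2 hJ
          have hJeq : J = {j0} := eq_singleton_of_forall (fun y hy => hsing y hy j0 hj0) hJ
          exact ⟨i, j0, by rw [hθS, hJeq]; rfl⟩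
      · have hθS : theta S = {σ : Equiv.Perm n | σ.symm j ∈ I} := by rw [hSc, theta_col]
        by_cases hI : I = ∅
        · left; rw [hθS, hI]; ext σ; simp
        · right
          have hsing : ∀ y ∈ I, ∀ z ∈ I, y = z := by
            intro y hy z hz
            by_contra hyz
            exact hcolbig ⟨S, hSmem, I, j, hθS, y, hy, z, hz, hyz⟩
          obtain ⟨i0, hi0⟩ := Set.nonempty_iff_ne_empty.2 hI
          have hIeq : I = {i0} := eq_singleton_of_forall (fun y hy => hsing y hy i0 hi0) hI
          refine ⟨i0, j, ?_⟩
          rw [hθS, hIeq]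
          ext σ
          simp only [Set.mem_setOf_eq, Set.mem_singleton_iff, Equiv.symm_apply_eq]
          exact ⟨fun h => h.symm, fun h => h.symm⟩
    have hshare : ∀ S ∈ 𝒮, ∀ (i j : n), theta S = {σ : Equiv.Perm n | σ i = j} →
        ∀ T ∈ 𝒮, ∀ (i' j' : n), theta T = {σ : Equiv.Perm n | σ i' = j'} →
        i = i' ∨ j = j' := by
      intro S hSmem i j hθS T hTmem i' j' hθT
      by_cases hii : i = i'
      · exact Or.inl hii
      rcases hpair S hSmem T hTmem with hp | hp
      · rw [hθS, hθT] at hp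
        have hp' : {σ : Equiv.Perm n | σ i ∈ ({j} : Set n)} =
            {σ : Equiv.Perm n | σ i' ∈ ({j'} : Set n)} := hp
        rcases rowrow_eq h3 hii hp' with ⟨hJ, _⟩ | ⟨hJ, _⟩
        · exact absurd (Set.ext_iff.1 hJ j) (by simp)
        · obtain ⟨z, hz1, _⟩ := h3 j j
          have : z ∈ ({j} : Set n) := hJ ▸ Set.mem_univ z
          exact absurd this hz1
      · by_cases hjj : j = j'
        · exact Or.inr hjj
        exfalso
        obtain ⟨σ', h1', h2'⟩ := perm2 hii hjj
        have : σ' ∈ ({σ : Equiv.Perm n | σ i = j} ∩ {σ : Equiv.Perm n | σ i' = j'}) := ⟨h1', h2'⟩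
        rw [hθS, hθT] at hp
        rw [hp] at this; exact this
    by_cases hall : ∀ S ∈ 𝒮, theta S = ∅
    · refine ⟨∅, axial_empty x0, ?_, by rw [theta_empty]; exact fun h => h⟩
      intro S hSmem
      exact qLesim_empty ((theta_eq_empty_iff S).1 (hall S hSmem)) (axial_empty x0) x0
    · push_neg at hall
      obtain ⟨S0, hS0mem, hS0ne⟩ := hall
      obtain ⟨i0, j0, hθ0⟩ := (hP S0 hS0mem).resolve_left (Set.nonempty_iff_ne_empty.1 hS0ne)
      by_cases hcomm : ∀ S ∈ 𝒮, ∀ (i j : n), theta S = {σ : Equiv.Perm n | σ i = j} → i = i0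
      · refine ⟨{i0} ×ˢ ({σ0 i0}ᶜ : Set n), Or.inl ⟨i0, {σ0 i0}ᶜ, rfl⟩, ?_, ?_⟩
        swap
        · rw [theta_row]; simp
        intro S hSmem
        refine qLesim_row (hax S hSmem) ?_
        rcases hP S hSmem with hθS | ⟨i, j, hθS⟩
        · rw [hθS]; exact Set.empty_subset _
        · have hii0 : i = i0 := hcomm S hSmem i j hθS
          subst hii0
          rw [hθS]
          intro σ hσmem
          simp only [Set.mem_setOf_eq, Set.mem_compl_iff, Set.mem_singleton_iff] at hσmem ⊢
          intro heq
          have hσ0n : σ0 i ≠ j := by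
            intro hc
            have := hσ0 S hSmem
            rw [hθS] at this
            exact this hc
          exact hσ0n (heq ▸ hσmem)
      · push_neg at hcomm
        obtain ⟨S1, hS1mem, i1, j1, hθ1, hi1ne⟩ := hcomm
        have hj1 : j1 = j0 := by
          rcases hshare S1 hS1mem i1 j1 hθ1 S0 hS0mem i0 j0 hθ0 with h | h
          · exact absurd h hi1ne
          · exact h
        rw [hj1] at hθ1
        have hcol : ∀ S ∈ 𝒮, ∀ (i j : n), theta S = {σ : Equiv.Perm n | σ i = j} → j = j0 := by
          intro S hSmem i j hθS
          rcases hshare S hSmem i j hθS S0 hS0mem i0 j0 hθ0 with h0 | h0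
          · rcases hshare S hSmem i j hθS S1 hS1mem i1 j0 hθ1 with h1 | h1
            · exact absurd (h0 ▸ h1) (fun hc => hi1ne hc.symm)
            · exact h1
          · exact h0
        refine ⟨({σ0.symm j0}ᶜ : Set n) ×ˢ ({j0} : Set n),
          Or.inr ⟨{σ0.symm j0}ᶜ, j0, rfl⟩, ?_, ?_⟩
        swap
        · rw [theta_col]; simp
        intro S hSmem
        refine qLesim_col (hax S hSmem) ?_
        rcases hP S hSmem with hθS | ⟨i, j, hθS⟩
        · rw [hθS]; exact Set.empty_subset _
        · have hjj0 : j = j0 := hcol S hSmem i j hθS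
          subst hjj0
          rw [hθS]
          intro σ hσmem
          simp only [Set.mem_setOf_eq, Set.mem_compl_iff, Set.mem_singleton_iff] at hσmem ⊢
          intro heq
          have hσ0n : σ0 i ≠ j := by
            intro hc
            have := hσ0 S hSmem
            rw [hθS] at this
            exact this hc
          apply hσ0n
          have hs : σ.symm j = i := by rw [← hσmem, Equiv.symm_apply_apply]
          have hs0 : σ0.symm j = i := heq ▸ hs
          rw [← hs0, Equiv.apply_symm_apply]

end Complete


/-- for `|n| > 2`, `theta` is a `≲`-complete `(∪•, ∅)`-representation of the
quotient partial algebra `A(n,n) = X(n,n)/∼` over the base of all permutations of `n`. -/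
theorem stmt_12 {n : Type} (hn : 2 < Cardinal.mk n) :
    -- the explicit values of the representation
    (∀ (i : n) (J : Set n), theta ({i} ×ˢ J) = {σ : Equiv.Perm n | σ i ∈ J}) ∧
    (∀ (I : Set n) (j : n), theta (I ×ˢ ({j} : Set n)) = {σ : Equiv.Perm n | σ.symm j ∈ I}) ∧
    -- well-definedness and faithfulness on the quotient
    (∀ S T : Set (n × n), Axial S → Axial T → (eqv S T ↔ theta S = theta T)) ∧
    -- zero is represented correctly
    theta (∅ : Set (n × n)) = ∅ ∧
    -- definedness of ⊔• matches disjointness of the images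
    (∀ S T : Set (n × n), Axial S → Axial T → (qDefined S T ↔ theta S ∩ theta T = ∅)) ∧
    -- ⊔• is represented as union
    (∀ S T : Set (n × n), Axial S → Axial T → S ∩ T = ∅ → Axial (S ∪ T) →
      theta (S ∪ T) = theta S ∪ theta T) ∧
    -- the representation is ≲-complete
    (∀ 𝒮 : Set (Set (n × n)), (∀ S ∈ 𝒮, Axial S) →
      (∀ S ∈ 𝒮, ∀ T ∈ 𝒮, ¬ eqv S T → qDefined S T) →
      ∀ a : Set (n × n), Axial a → (∀ S ∈ 𝒮, qLesim S a) →
        (∀ b : Set (n × n), Axial b → (∀ S ∈ 𝒮, qLesim S b) → qLesim a b) →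
        theta a = ⋃ S ∈ 𝒮, theta S) := by
  have h3 := three_of_card hn
  have hne := nonempty_of_card hn
  refine ⟨theta_row, theta_col, fun S T hS hT => eqv_iff_theta h3 hne hS hT, theta_empty,
    fun S T hS hT => qDefined_iff hS hT, fun S T _ _ _ _ => theta_union S T, ?_⟩
  intro 𝒮 hax hpair a haax hub hmin
  have hpair' : ∀ S ∈ 𝒮, ∀ T ∈ 𝒮, theta S = theta T ∨ theta S ∩ theta T = ∅ := by
    intro S hS T hT
    by_cases he : eqv S T
    · exact Or.inl (eqv_theta he)
    · exact Or.inr ((qDefined_iff (hax S hS) (hax T hT)).1 (hpair S hS T hT he))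
  apply Set.Subset.antisymm
  · intro σ0 hσ0a
    by_contra hσ0
    have hσ0' : ∀ S ∈ 𝒮, σ0 ∉ theta S := by
      intro S hS hmem
      exact hσ0 (Set.mem_biUnion hS hmem)
    obtain ⟨b, hbax, hbles, hbnot⟩ := exists_bound h3 hne 𝒮 hax hpair' σ0 hσ0'
    exact hbnot (qLesim_theta_sub (hmin b hbax hbles) hσ0a)
  · intro σ hσ
    simp only [Set.mem_iUnion] at hσ
    obtain ⟨S, hS, hmem⟩ := hσ
    exact qLesim_theta_sub (hub S hS) hmem
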